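/- Let {e_n}_{n≥0} be an orthonormal basis of H, k ≥ 1, α₀,…,α_k ∈ ℂ with Σ|α_i|² < 1, and define T(e₀) = α₀e₀ + ⋯ + α_k e_k, T(e_n) = e_{n+k} for n ≥ 1. Then dim D_T = 1; in fact I − T*T = (1 − Σ_{i=0}^k |α_i|²) · (projection onto ℂe₀). -/

import Mathlib

open ContinuousLinearMap
open scoped InnerProductSpace

theorem rank_one_perturbation_defect_dim_one
    {H : Type*} [NormedAddCommGroup H] [InnerProductSpace ℂ H] [CompleteSpace H]
    (e : HilbertBasis ℕ ℂ H) (k : ℕ) (hk : 1 ≤ k) (α : ℕ → ℂ)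
    (hα : ∑ i ∈ Finset.range (k + 1), ‖α i‖ ^ 2 < 1)
    (T DT Q : H →L[ℂ] H)
    (hT0 : T (e 0) = ∑ i ∈ Finset.range (k + 1), α i • e i)
    (hTn : ∀ n : ℕ, 1 ≤ n → T (e n) = e (n + k))
    (hQ : ∀ m : ℕ, Q (e m) = if m = 0 then e 0 else 0)
    (hDTpos : DT.IsPositive) (hDT : DT * DT = 1 - adjoint T * T) :
    1 - adjoint T * T = (1 - ∑ i ∈ Finset.range (k + 1), ‖α i‖ ^ 2 : ℝ) • Q ∧
      Module.finrank ℂ ((LinearMap.range (DT : H →ₗ[ℂ] H)).topologicalClosure) = 1 := by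
  set c : ℝ := 1 - ∑ i ∈ Finset.range (k + 1), ‖α i‖ ^ 2 with hc
  have hc0 : 0 < c := sub_pos.mpr hα
  have horth := e.orthonormal
  have hee : ∀ i j : ℕ, ⟪e i, e j⟫_ℂ = if i = j then 1 else 0 := fun i j =>
    orthonormal_iff_ite.mp horth i j
  have hdense : Dense (Submodule.span ℂ (Set.range e) : Set H) :=
    Submodule.dense_iff_topologicalClosure_eq_top.mpr e.dense_span
  have ext_basis : ∀ x y : H, (∀ i, ⟪e i, x⟫_ℂ = ⟪e i, y⟫_ℂ) → x = y := by
    intro x y h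
    apply e.repr.injective
    ext i
    rw [e.repr_apply_apply, e.repr_apply_apply, h i]
  -- inner products of images of basis vectors
  have hTT : ∀ m n : ℕ, ⟪T (e m), T (e n)⟫_ℂ =
      if m = 0 ∧ n = 0 then ((∑ i ∈ Finset.range (k + 1), ‖α i‖ ^ 2 : ℝ) : ℂ)
      else if m = n then 1 else 0 := by
    intro m n
    rcases Nat.eq_zero_or_pos m with hm | hm
    · rcases Nat.eq_zero_or_pos n with hn | hn
      · subst hm; subst hn
        rw [hT0, if_pos ⟨rfl, rfl⟩, sum_inner]
        push_cast
        refine Finset.sum_congr rfl fun i hi => ?_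
        rw [inner_smul_left, inner_sum, Finset.sum_eq_single i]
        · rw [inner_smul_right, hee, if_pos rfl, mul_one, mul_comm, Complex.mul_conj,
            Complex.normSq_eq_norm_sq]
          push_cast
          ring
        · intro j hj hji
          rw [inner_smul_right, hee, if_neg (Ne.symm hji), mul_zero]
        · intro hi'; exact absurd hi hi'
      · subst hm
        rw [hT0, hTn n hn, if_neg (show ¬((0:ℕ) = 0 ∧ n = 0) by omega),
          if_neg (show ¬((0:ℕ) = n) by omega), sum_inner]
        refine Finset.sum_eq_zero fun i hi => ?_
        have hik := Finset.mem_range.mp hi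
        rw [inner_smul_left, hee, if_neg (show ¬(i = n + k) by omega), mul_zero]
    · rcases Nat.eq_zero_or_pos n with hn | hn
      · subst hn
        rw [hT0, hTn m hm, if_neg (show ¬(m = 0 ∧ (0:ℕ) = 0) by omega),
          if_neg (show ¬(m = 0) by omega), inner_sum]
        refine Finset.sum_eq_zero fun i hi => ?_
        have hik := Finset.mem_range.mp hi
        rw [inner_smul_right, hee, if_neg (show ¬(m + k = i) by omega), mul_zero]
      · by_cases h : m = n
        · subst h
          rw [hTn m hm, hee, if_pos rfl, if_neg (show ¬(m = 0 ∧ m = 0) by omega), if_pos rfl]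
        · rw [hTn m hm, hTn n hn, hee, if_neg (show ¬(m + k = n + k) by omega),
            if_neg (show ¬(m = 0 ∧ n = 0) by omega), if_neg h]
  have part1 : 1 - adjoint T * T = (c : ℝ) • Q := by
    refine ContinuousLinearMap.ext_on hdense ?_
    rintro x ⟨n, rfl⟩
    refine ext_basis _ _ fun m => ?_
    have hsmul : ((c : ℝ) • Q) (e n) = (c : ℂ) • Q (e n) := by
      rw [ContinuousLinearMap.smul_apply, ← Complex.coe_smul]
    rw [hsmul, inner_smul_right, hQ n, sub_apply, one_apply_eq_self, inner_sub_right,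
      mul_apply_eq_comp, adjoint_inner_right, hTT, hee]
    rcases Nat.eq_zero_or_pos n with hn | hn
    · subst hn
      rcases Nat.eq_zero_or_pos m with hm | hm
      · subst hm
        simp only [and_self, reduceIte, hee]
        rw [hc]; push_cast; ring
      · simp [hm.ne', hee]
    · rw [if_neg (show ¬(m = 0 ∧ n = 0) by omega), if_neg (show ¬(n = 0) by omega),
        inner_zero_right, mul_zero, sub_self]
  refine ⟨part1, ?_⟩
  -- second part
  have hcne : (c : ℝ) ≠ 0 := ne_of_gt hc0
  have hDT2 : DT * DT = (c : ℝ) • Q := by rw [hDT, part1]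
  have hsa : IsSelfAdjoint DT := hDTpos.isSelfAdjoint
  have hadj : adjoint DT = DT := hsa
  have hsym : ∀ z y : H, ⟪DT z, y⟫_ℂ = ⟪z, DT y⟫_ℂ := by
    intro z y
    nth_rewrite 1 [← hadj]
    rw [adjoint_inner_left]
  have he0 : e 0 ≠ 0 := horth.ne_zero 0
  -- Q is the rank one projection
  have hQ' : Q = (innerSL ℂ (e 0)).smulRight (e 0) := by
    refine ContinuousLinearMap.ext_on hdense ?_
    rintro x ⟨m, rfl⟩
    have : ((innerSL ℂ (e 0)).smulRight (e 0)) (e m) = ⟪e 0, e m⟫_ℂ • e 0 := rfl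
    rw [this, hQ m, hee]
    by_cases h : m = 0
    · subst h; simp
    · rw [if_neg h, if_neg (Ne.symm h), zero_smul]
  have hkerQ : LinearMap.ker (Q : H →ₗ[ℂ] H) = (ℂ ∙ e 0)ᗮ := by
    ext x
    rw [LinearMap.mem_ker, Submodule.mem_orthogonal_singleton_iff_inner_right, hQ']
    constructor
    · intro h
      have h' : ⟪e 0, x⟫_ℂ • e 0 = 0 := h
      rcases smul_eq_zero.mp h' with h'' | h''
      · exact h''
      · exact absurd h'' he0
    · intro h
      show ⟪e 0, x⟫_ℂ • e 0 = 0
      rw [h, zero_smul]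
  have hkerDT : LinearMap.ker (DT : H →ₗ[ℂ] H) = LinearMap.ker (Q : H →ₗ[ℂ] H) := by
    ext x
    simp only [LinearMap.mem_ker, ContinuousLinearMap.coe_coe]
    constructor
    · intro h
      have h2 : ((c : ℝ) • Q) x = 0 := by
        rw [← hDT2, mul_apply_eq_comp, h, map_zero]
      rw [ContinuousLinearMap.smul_apply] at h2
      rcases smul_eq_zero.mp h2 with h' | h'
      · exact absurd h' hcne
      · exact h'
    · intro h
      have h2 : DT (DT x) = 0 := by
        rw [← mul_apply_eq_comp, hDT2, ContinuousLinearMap.smul_apply, h, smul_zero]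
      have h3 : ⟪DT x, DT x⟫_ℂ = 0 := by
        rw [hsym, h2, inner_zero_right]
      exact inner_self_eq_zero.mp h3
  have horthrange : (LinearMap.range (DT : H →ₗ[ℂ] H))ᗮ = LinearMap.ker (DT : H →ₗ[ℂ] H) := by
    ext x
    rw [Submodule.mem_orthogonal, LinearMap.mem_ker, ContinuousLinearMap.coe_coe]
    constructor
    · intro h
      have h' : ∀ y, ⟪y, DT x⟫_ℂ = ⟪y, (0 : H)⟫_ℂ := by
        intro y
        rw [← hsym, h (DT y) ⟨y, rfl⟩, inner_zero_right]
      exact ext_inner_left ℂ h'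
    · rintro h u ⟨y, rfl⟩
      show ⟪DT y, x⟫_ℂ = 0
      rw [hsym, h, inner_zero_right]
  have hclos : (LinearMap.range (DT : H →ₗ[ℂ] H)).topologicalClosure = ℂ ∙ e 0 := by
    rw [← Submodule.orthogonal_orthogonal_eq_closure, horthrange, hkerDT, hkerQ,
      Submodule.orthogonal_orthogonal]
  rw [hclos]
  exact finrank_span_singleton he0
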